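/- Let δ₀ be a geodesic from q to p and δ₁ a (K,C)-quasi-geodesic starting at p, with d(q,p) = d(q, δ₁) (p realizes the distance from q to the image of δ₁). Then the concatenation of δ₀ and δ₁ is a (K',C')-quasi-geodesic, where K' and C' depend only on K and C; in fact one can take K' = max(2K+1, 3) and C' = KC. -/

import Mathlib

open Metric Set

/-- `γ` restricted to `[a,b]` is a geodesic (isometric embedding of the interval). -/
def IsGeodesicOn {X : Type*} [MetricSpace X] (γ : ℝ → X) (a b : ℝ) : Prop :=
  ∀ s ∈ Set.Icc a b, ∀ t ∈ Set.Icc a b, dist (γ s) (γ t) = |s - t|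

/-- A geodesic metric space: any two points are joined by a geodesic. -/
def GeodesicSpace (X : Type*) [MetricSpace X] : Prop :=
  ∀ x y : X, ∃ γ : ℝ → X, γ 0 = x ∧ γ (dist x y) = y ∧ IsGeodesicOn γ 0 (dist x y)

/-- The concatenation of a path `δ₀` (reparametrized so that it ends at time 0)
with a path `δ₁` starting at time 0. -/
noncomputable def concatPath {X : Type*} (δ₀ δ₁ : ℝ → X) (d : ℝ) : ℝ → X :=
  fun u => if u ≤ 0 then δ₀ (u + d) else δ₁ u

/-- if `δ₀` is a geodesic from `q` to `p`, `δ₁` is a `(K,C)`-quasi-geodesic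
starting at `p`, and `d(q,p) = d(q, δ₁)`, then the concatenation is a
`(max (2K+1) 3, K*C)`-quasi-geodesic. -/
theorem stmt3 {X : Type*} [MetricSpace X] (K C : ℝ) (hK : 1 ≤ K) (hC : 0 ≤ C)
    (q p : X) (δ₀ : ℝ → X) (hδ₀ : IsGeodesicOn δ₀ 0 (dist q p))
    (hq : δ₀ 0 = q) (hp : δ₀ (dist q p) = p)
    (b : ℝ) (hb : 0 ≤ b) (δ₁ : ℝ → X) (hδ₁0 : δ₁ 0 = p)
    (hqg : ∀ s ∈ Set.Icc (0:ℝ) b, ∀ t ∈ Set.Icc (0:ℝ) b,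
      |s - t| / K - C ≤ dist (δ₁ s) (δ₁ t) ∧ dist (δ₁ s) (δ₁ t) ≤ K * |s - t| + C)
    (hproj : dist q p = Metric.infDist q (δ₁ '' Set.Icc (0:ℝ) b)) :
    ∀ s ∈ Set.Icc (-(dist q p)) b, ∀ t ∈ Set.Icc (-(dist q p)) b,
      |s - t| / max (2 * K + 1) 3 - K * C
          ≤ dist (concatPath δ₀ δ₁ (dist q p) s) (concatPath δ₀ δ₁ (dist q p) t) ∧
      dist (concatPath δ₀ δ₁ (dist q p) s) (concatPath δ₀ δ₁ (dist q p) t)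
          ≤ max (2 * K + 1) 3 * |s - t| + K * C := by
  set M : ℝ := max (2 * K + 1) 3 with hMdef
  set D : ℝ := dist q p with hDdef
  have hD0 : 0 ≤ D := dist_nonneg
  have hM3 : (3:ℝ) ≤ M := le_max_right _ _
  have hM2K : 2 * K + 1 ≤ M := le_max_left _ _
  have hMpos : (0:ℝ) < M := by linarith
  have hK0 : (0:ℝ) < K := by linarith
  have hKC : C ≤ K * C := by nlinarith
  have hKC0 : 0 ≤ K * C := by positivity
  have hinf : ∀ u ∈ Set.Icc (0:ℝ) b, D ≤ dist q (δ₁ u) := by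
    intro u hu
    calc D = Metric.infDist q (δ₁ '' Set.Icc (0:ℝ) b) := hproj
      _ ≤ dist q (δ₁ u) := Metric.infDist_le_dist_of_mem (Set.mem_image_of_mem _ hu)
  -- auxiliary: mixed case s ≤ 0 < t
  have aux : ∀ s, -D ≤ s → s ≤ 0 → ∀ t, 0 < t → t ≤ b →
      |s - t| / M - K * C ≤ dist (δ₀ (s + D)) (δ₁ t) ∧
      dist (δ₀ (s + D)) (δ₁ t) ≤ M * |s - t| + K * C := by
    intro s hs1 hs2 t ht1 ht2
    have hst : |s - t| = t - s := by rw [abs_sub_comm]; exact abs_of_nonneg (by linarith)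
    have hmemS : s + D ∈ Set.Icc (0:ℝ) D := ⟨by linarith, by linarith⟩
    have hmemD : D ∈ Set.Icc (0:ℝ) D := ⟨hD0, le_refl _⟩
    have hmem0 : (0:ℝ) ∈ Set.Icc (0:ℝ) D := ⟨le_refl _, hD0⟩
    have hxp : dist (δ₀ (s + D)) p = -s := by
      rw [← hp, hδ₀ _ hmemS _ hmemD]
      rw [abs_of_nonpos (by linarith)]; ring
    have hqx : dist q (δ₀ (s + D)) = s + D := by
      rw [← hq, hδ₀ _ hmem0 _ hmemS]
      rw [abs_of_nonpos (by linarith)]; ring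
    have htmem : t ∈ Set.Icc (0:ℝ) b := ⟨le_of_lt ht1, ht2⟩
    have h0mem : (0:ℝ) ∈ Set.Icc (0:ℝ) b := ⟨le_refl _, hb⟩
    have hpt := hqg 0 h0mem t htmem
    rw [hδ₁0] at hpt
    have hpt1 : t / K - C ≤ dist p (δ₁ t) := by
      have : |(0:ℝ) - t| = t := by rw [abs_sub_comm, sub_zero]; exact abs_of_nonneg (le_of_lt ht1)
      calc t / K - C = |(0:ℝ) - t| / K - C := by rw [this]
        _ ≤ dist p (δ₁ t) := hpt.1
    have hpt2 : dist p (δ₁ t) ≤ K * t + C := by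
      have : |(0:ℝ) - t| = t := by rw [abs_sub_comm, sub_zero]; exact abs_of_nonneg (le_of_lt ht1)
      calc dist p (δ₁ t) ≤ K * |(0:ℝ) - t| + C := hpt.2
        _ = K * t + C := by rw [this]
    set d : ℝ := dist (δ₀ (s + D)) (δ₁ t) with hddef
    have hd0 : 0 ≤ d := dist_nonneg
    have hd1 : -s ≤ d := by
      have h1 : D ≤ dist q (δ₁ t) := hinf t htmem
      have h2 : dist q (δ₁ t) ≤ dist q (δ₀ (s + D)) + d := dist_triangle _ _ _
      rw [hqx] at h2; linarith
    have hd2 : t / K - C + s ≤ d := by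
      have h2 : dist p (δ₁ t) ≤ dist p (δ₀ (s + D)) + d := dist_triangle _ _ _
      have hxp' : dist p (δ₀ (s + D)) = -s := by rw [dist_comm]; exact hxp
      rw [hxp'] at h2
      linarith
    constructor
    · rw [hst, div_sub' (ne_of_gt hMpos), div_le_iff₀ hMpos]
      have hKd : t / K - C ≤ 2 * d := by linarith
      have ht' : t ≤ 2 * K * d + K * C := by
        have := (div_le_iff₀ hK0).mp (by linarith : t / K ≤ 2 * d + C)
        nlinarith
      nlinarith [mul_le_mul_of_nonneg_left hM2K (by linarith : (0:ℝ) ≤ d + K * C)]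
    · rw [hst]
      have h3 : d ≤ -s + (K * t + C) := by
        have := dist_triangle (δ₀ (s + D)) p (δ₁ t)
        rw [hxp] at this; linarith
      have hKM : K ≤ M := by linarith
      nlinarith [mul_le_mul_of_nonneg_right hKM (le_of_lt ht1),
        mul_le_mul_of_nonneg_right (by linarith : (1:ℝ) ≤ M) (by linarith : (0:ℝ) ≤ -s)]
  intro s hs t ht
  obtain ⟨hs1, hs2⟩ := hs
  obtain ⟨ht1, ht2⟩ := ht
  rcases le_or_gt s 0 with hs0 | hs0 <;> rcases le_or_gt t 0 with ht0 | ht0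
  · -- both on geodesic
    simp only [concatPath, if_pos hs0, if_pos ht0]
    have := hδ₀ (s + D) ⟨by linarith, by linarith⟩ (t + D) ⟨by linarith, by linarith⟩
    rw [this]
    have h1 : s + D - (t + D) = s - t := by ring
    rw [h1]
    have habs : 0 ≤ |s - t| := abs_nonneg _
    constructor
    · have : |s - t| / M ≤ |s - t| := by
        rw [div_le_iff₀ hMpos]; nlinarith
      linarith
    · nlinarith
  · -- mixed: s ≤ 0 < t
    simp only [concatPath, if_pos hs0, if_neg (not_le.mpr ht0)]
    exact aux s hs1 hs0 t ht0 ht2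
  · -- mixed: t ≤ 0 < s
    simp only [concatPath, if_neg (not_le.mpr hs0), if_pos ht0]
    have h := aux t ht1 ht0 s hs0 hs2
    rw [dist_comm, abs_sub_comm]
    exact h
  · -- both on quasi-geodesic
    simp only [concatPath, if_neg (not_le.mpr hs0), if_neg (not_le.mpr ht0)]
    have h := hqg s ⟨le_of_lt hs0, hs2⟩ t ⟨le_of_lt ht0, ht2⟩
    have habs : 0 ≤ |s - t| := abs_nonneg _
    constructor
    · have h1 : |s - t| / M ≤ |s - t| / K := by
        apply div_le_div_of_nonneg_left habs hK0; linarith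
      linarith [h.1]
    · have hKM : K ≤ M := by linarith
      nlinarith [h.2, mul_le_mul_of_nonneg_right hKM habs]
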